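/- Let I₁ ≠ 0, I₂, I₃, J₁, J₂ > 0, c_u, c_y, c_v be real constants and consider the geodesic family u(s) = −I₁ s + c_u, y(s) = I₃ s + c_y, z(s) = √(((2J₂ s + J₁)² + 8 I₁²)/(4 J₂)), v(s) = √2 · arctan((2J₂ s + J₁)/(2√2 I₁)) − I₂ s + c_v of the Biv pp-wave metric. Then the Hamiltonian constraint with unit potential, H = (1/(2z²))(z²(2 − 2u̇v̇ + ẏ² + ż²) − 2u̇²) = 0, holds along the curve (at one, hence every, value of s) if and only if the constants satisfy J₂ + I₃² − 2 I₁ I₂ + 2 = 0; indeed, along the curve G_{μν} q̇^μ q̇^ν + 2 = J₂ + I₃² − 2 I₁ I₂ + 2 identically. -/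

import Mathlib

noncomputable section

namespace BivPPWave

/-- Derivative of the `i`-th component of a curve. -/
def qd (q : ℝ → Fin 4 → ℝ) (i : Fin 4) (s : ℝ) : ℝ :=
  deriv (fun t => q t i) s

/-- The explicit geodesic family `u(s) = −I₁s + c_u`,
`v(s) = √2·arctan((2J₂s + J₁)/(2√2 I₁)) − I₂s + c_v`, `y(s) = I₃s + c_y`,
`z(s) = √(((2J₂s + J₁)² + 8I₁²)/(4J₂))` of the Biv pp-wave metric. -/
def geoCurve (I₁ I₂ I₃ J₁ J₂ c_u c_y c_v : ℝ) (s : ℝ) : Fin 4 → ℝ :=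
  ![-I₁ * s + c_u,
    Real.sqrt 2 * Real.arctan ((2 * J₂ * s + J₁) / (2 * Real.sqrt 2 * I₁)) - I₂ * s + c_v,
    I₃ * s + c_y,
    Real.sqrt (((2 * J₂ * s + J₁)^2 + 8 * I₁^2) / (4 * J₂))]

lemma qd0 (I₁ I₂ I₃ J₁ J₂ c_u c_y c_v : ℝ) (s : ℝ) :
    qd (geoCurve I₁ I₂ I₃ J₁ J₂ c_u c_y c_v) 0 s = -I₁ := by
  have : (fun t => geoCurve I₁ I₂ I₃ J₁ J₂ c_u c_y c_v t 0) = fun t => -I₁ * t + c_u := by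
    funext t; simp [geoCurve]
  rw [qd, this]
  exact (((hasDerivAt_id s).const_mul (-I₁)).add_const c_u).deriv.trans (by ring)

lemma qd2 (I₁ I₂ I₃ J₁ J₂ c_u c_y c_v : ℝ) (s : ℝ) :
    qd (geoCurve I₁ I₂ I₃ J₁ J₂ c_u c_y c_v) 2 s = I₃ := by
  have : (fun t => geoCurve I₁ I₂ I₃ J₁ J₂ c_u c_y c_v t 2) = fun t => I₃ * t + c_y := by
    funext t; simp [geoCurve]
  rw [qd, this]
  exact (((hasDerivAt_id s).const_mul I₃).add_const c_y).deriv.trans (by ring)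

lemma qd1 (I₁ I₂ I₃ J₁ J₂ c_u c_y c_v : ℝ) (s : ℝ) :
    qd (geoCurve I₁ I₂ I₃ J₁ J₂ c_u c_y c_v) 1 s =
      Real.sqrt 2 * ((1/(1+((2 * J₂ * s + J₁) / (2 * Real.sqrt 2 * I₁))^2))
        * (2 * J₂ / (2 * Real.sqrt 2 * I₁))) - I₂ := by
  have he : (fun t => geoCurve I₁ I₂ I₃ J₁ J₂ c_u c_y c_v t 1) =
      fun t => Real.sqrt 2 * Real.arctan ((2 * J₂ * t + J₁) / (2 * Real.sqrt 2 * I₁))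
        - I₂ * t + c_v := by
    funext t; simp [geoCurve]
  rw [qd, he]
  have hin : HasDerivAt (fun t => (2 * J₂ * t + J₁) / (2 * Real.sqrt 2 * I₁))
      (2 * J₂ / (2 * Real.sqrt 2 * I₁)) s := by
    simpa [mul_comm, mul_div_assoc] using
      (((hasDerivAt_id s).const_mul (2*J₂)).add_const J₁).div_const (2 * Real.sqrt 2 * I₁)
  have h1 := (Real.hasDerivAt_arctan ((2 * J₂ * s + J₁) / (2 * Real.sqrt 2 * I₁))).comp s hin
  have h2 : HasDerivAt (fun t => Real.sqrt 2 * Real.arctan ((2 * J₂ * t + J₁) /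
      (2 * Real.sqrt 2 * I₁)) - I₂ * t + c_v)
      (Real.sqrt 2 * ((1/(1+((2 * J₂ * s + J₁) / (2 * Real.sqrt 2 * I₁))^2))
        * (2 * J₂ / (2 * Real.sqrt 2 * I₁))) - I₂) s := by
    simpa using (((h1.const_mul (Real.sqrt 2)).sub (((hasDerivAt_id s).const_mul I₂))).add_const c_v)
  exact h2.deriv

lemma qd3 (I₁ I₂ I₃ J₁ J₂ c_u c_y c_v : ℝ) (hI₁ : I₁ ≠ 0) (hJ₂ : 0 < J₂) (s : ℝ) :
    qd (geoCurve I₁ I₂ I₃ J₁ J₂ c_u c_y c_v) 3 s =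
      (2 * J₂ * s + J₁) / (2 * Real.sqrt (((2 * J₂ * s + J₁)^2 + 8 * I₁^2) / (4 * J₂))) := by
  have he : (fun t => geoCurve I₁ I₂ I₃ J₁ J₂ c_u c_y c_v t 3) =
      fun t => Real.sqrt (((2 * J₂ * t + J₁)^2 + 8 * I₁^2) / (4 * J₂)) := by
    funext t; simp [geoCurve]
  rw [qd, he]
  have hin : HasDerivAt (fun t => ((2 * J₂ * t + J₁)^2 + 8 * I₁^2) / (4 * J₂))
      (2 * J₂ * s + J₁) s := by
    have h1 : HasDerivAt (fun t => 2 * J₂ * t + J₁) (2 * J₂) s := by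
      simpa [mul_comm] using ((hasDerivAt_id s).const_mul (2*J₂)).add_const J₁
    have h2 := ((h1.pow 2).add_const (8 * I₁^2)).div_const (4 * J₂)
    refine h2.congr_deriv ?_
    field_simp; ring
  have hpos : ((2 * J₂ * s + J₁)^2 + 8 * I₁^2) / (4 * J₂) ≠ 0 := by positivity
  exact (hin.sqrt hpos).deriv

lemma vdot_simp (I₁ J₂ a : ℝ) (hI₁ : I₁ ≠ 0) :
    Real.sqrt 2 * ((1/(1+(a / (2 * Real.sqrt 2 * I₁))^2)) * (2 * J₂ / (2 * Real.sqrt 2 * I₁)))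
      = 8 * I₁ * J₂ / (a^2 + 8 * I₁^2) := by
  have hs2 : Real.sqrt 2 ≠ 0 := by positivity
  have hs2sq : (Real.sqrt 2)^2 = 2 := Real.sq_sqrt (by norm_num)
  have hden : 1 + (a / (2 * Real.sqrt 2 * I₁))^2 ≠ 0 := by positivity
  have h8 : a^2 + 8 * I₁^2 ≠ 0 := by positivity
  field_simp
  linear_combination (4 * J₂ * a^2) * hs2sq

lemma key (I₁ I₂ I₃ J₁ J₂ c_u c_y c_v : ℝ) (hI₁ : I₁ ≠ 0) (hJ₂ : 0 < J₂) (s : ℝ) :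
    (-2 * qd (geoCurve I₁ I₂ I₃ J₁ J₂ c_u c_y c_v) 0 s
          * qd (geoCurve I₁ I₂ I₃ J₁ J₂ c_u c_y c_v) 1 s
      - (2 / (geoCurve I₁ I₂ I₃ J₁ J₂ c_u c_y c_v s 3)^2)
          * (qd (geoCurve I₁ I₂ I₃ J₁ J₂ c_u c_y c_v) 0 s)^2
      + (qd (geoCurve I₁ I₂ I₃ J₁ J₂ c_u c_y c_v) 2 s)^2
      + (qd (geoCurve I₁ I₂ I₃ J₁ J₂ c_u c_y c_v) 3 s)^2) + 2
    = J₂ + I₃^2 - 2 * I₁ * I₂ + 2 := by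
  have hz : geoCurve I₁ I₂ I₃ J₁ J₂ c_u c_y c_v s 3 =
      Real.sqrt (((2 * J₂ * s + J₁)^2 + 8 * I₁^2) / (4 * J₂)) := by simp [geoCurve]
  rw [qd0, qd1, qd2, qd3 _ _ _ _ _ _ _ _ hI₁ hJ₂, hz, vdot_simp _ _ _ hI₁]
  set a := 2 * J₂ * s + J₁ with ha
  have hgpos : 0 < (a^2 + 8 * I₁^2) / (4 * J₂) := by positivity
  have hzsq : (Real.sqrt ((a^2 + 8 * I₁^2) / (4 * J₂)))^2 = (a^2 + 8 * I₁^2) / (4 * J₂) :=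
    Real.sq_sqrt hgpos.le
  have h8 : a^2 + 8 * I₁^2 ≠ 0 := by positivity
  rw [div_pow, mul_pow, hzsq]
  field_simp
  ring

lemma zne (I₁ I₂ I₃ J₁ J₂ c_u c_y c_v : ℝ) (hI₁ : I₁ ≠ 0) (hJ₂ : 0 < J₂) (s : ℝ) :
    geoCurve I₁ I₂ I₃ J₁ J₂ c_u c_y c_v s 3 ≠ 0 := by
  have hz : geoCurve I₁ I₂ I₃ J₁ J₂ c_u c_y c_v s 3 =
      Real.sqrt (((2 * J₂ * s + J₁)^2 + 8 * I₁^2) / (4 * J₂)) := by simp [geoCurve]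
  rw [hz]
  exact ne_of_gt (Real.sqrt_pos.2 (by positivity))

lemma Hval (I₁ I₂ I₃ J₁ J₂ c_u c_y c_v : ℝ) (hI₁ : I₁ ≠ 0) (hJ₂ : 0 < J₂) (s : ℝ) :
    (1 / (2 * (geoCurve I₁ I₂ I₃ J₁ J₂ c_u c_y c_v s 3)^2))
      * ((geoCurve I₁ I₂ I₃ J₁ J₂ c_u c_y c_v s 3)^2
          * (2 - 2 * qd (geoCurve I₁ I₂ I₃ J₁ J₂ c_u c_y c_v) 0 s
                * qd (geoCurve I₁ I₂ I₃ J₁ J₂ c_u c_y c_v) 1 s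
            + (qd (geoCurve I₁ I₂ I₃ J₁ J₂ c_u c_y c_v) 2 s)^2
            + (qd (geoCurve I₁ I₂ I₃ J₁ J₂ c_u c_y c_v) 3 s)^2)
        - 2 * (qd (geoCurve I₁ I₂ I₃ J₁ J₂ c_u c_y c_v) 0 s)^2)
    = (J₂ + I₃^2 - 2 * I₁ * I₂ + 2) / 2 := by
  have h := key I₁ I₂ I₃ J₁ J₂ c_u c_y c_v hI₁ hJ₂ s
  have hzne := zne I₁ I₂ I₃ J₁ J₂ c_u c_y c_v hI₁ hJ₂ s
  set z := geoCurve I₁ I₂ I₃ J₁ J₂ c_u c_y c_v s 3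
  set u' := qd (geoCurve I₁ I₂ I₃ J₁ J₂ c_u c_y c_v) 0 s
  set v' := qd (geoCurve I₁ I₂ I₃ J₁ J₂ c_u c_y c_v) 1 s
  set y' := qd (geoCurve I₁ I₂ I₃ J₁ J₂ c_u c_y c_v) 2 s
  set w' := qd (geoCurve I₁ I₂ I₃ J₁ J₂ c_u c_y c_v) 3 s
  field_simp at h ⊢
  linarith [h]

/-- Along the explicit geodesic family of the Biv pp-wave metric,
`G_{μν} q̇^μ q̇^ν + 2 = J₂ + I₃² − 2I₁I₂ + 2` identically; hence the Hamiltonian constraint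
with unit potential `H = (1/(2z²))(z²(2 − 2u̇v̇ + ẏ² + ż²) − 2u̇²) = 0` holds at one (hence
every) value of `s` if and only if `J₂ + I₃² − 2I₁I₂ + 2 = 0`. -/
theorem biv_geodesic_constraint_iff
    (I₁ I₂ I₃ J₁ J₂ c_u c_y c_v : ℝ) (hI₁ : I₁ ≠ 0) (hJ₂ : 0 < J₂) :
    -- `G_{μν} q̇^μ q̇^ν + 2 = J₂ + I₃² − 2I₁I₂ + 2` identically along the curve
    (∀ s : ℝ,
      (-2 * qd (geoCurve I₁ I₂ I₃ J₁ J₂ c_u c_y c_v) 0 s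
            * qd (geoCurve I₁ I₂ I₃ J₁ J₂ c_u c_y c_v) 1 s
        - (2 / (geoCurve I₁ I₂ I₃ J₁ J₂ c_u c_y c_v s 3)^2)
            * (qd (geoCurve I₁ I₂ I₃ J₁ J₂ c_u c_y c_v) 0 s)^2
        + (qd (geoCurve I₁ I₂ I₃ J₁ J₂ c_u c_y c_v) 2 s)^2
        + (qd (geoCurve I₁ I₂ I₃ J₁ J₂ c_u c_y c_v) 3 s)^2) + 2
      = J₂ + I₃^2 - 2 * I₁ * I₂ + 2)
    -- the constraint holds at one value of `s` iff the constants relation holds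
    ∧ ((∃ s : ℝ,
        (1 / (2 * (geoCurve I₁ I₂ I₃ J₁ J₂ c_u c_y c_v s 3)^2))
          * ((geoCurve I₁ I₂ I₃ J₁ J₂ c_u c_y c_v s 3)^2
              * (2 - 2 * qd (geoCurve I₁ I₂ I₃ J₁ J₂ c_u c_y c_v) 0 s
                    * qd (geoCurve I₁ I₂ I₃ J₁ J₂ c_u c_y c_v) 1 s
                + (qd (geoCurve I₁ I₂ I₃ J₁ J₂ c_u c_y c_v) 2 s)^2
                + (qd (geoCurve I₁ I₂ I₃ J₁ J₂ c_u c_y c_v) 3 s)^2)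
            - 2 * (qd (geoCurve I₁ I₂ I₃ J₁ J₂ c_u c_y c_v) 0 s)^2) = 0)
      ↔ J₂ + I₃^2 - 2 * I₁ * I₂ + 2 = 0)
    -- equivalently, it holds at every value of `s` iff the constants relation holds
    ∧ ((∀ s : ℝ,
        (1 / (2 * (geoCurve I₁ I₂ I₃ J₁ J₂ c_u c_y c_v s 3)^2))
          * ((geoCurve I₁ I₂ I₃ J₁ J₂ c_u c_y c_v s 3)^2
              * (2 - 2 * qd (geoCurve I₁ I₂ I₃ J₁ J₂ c_u c_y c_v) 0 s
                    * qd (geoCurve I₁ I₂ I₃ J₁ J₂ c_u c_y c_v) 1 s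
                + (qd (geoCurve I₁ I₂ I₃ J₁ J₂ c_u c_y c_v) 2 s)^2
                + (qd (geoCurve I₁ I₂ I₃ J₁ J₂ c_u c_y c_v) 3 s)^2)
            - 2 * (qd (geoCurve I₁ I₂ I₃ J₁ J₂ c_u c_y c_v) 0 s)^2) = 0)
      ↔ J₂ + I₃^2 - 2 * I₁ * I₂ + 2 = 0) := by
  refine ⟨key I₁ I₂ I₃ J₁ J₂ c_u c_y c_v hI₁ hJ₂, ?_, ?_⟩
  · constructor
    · rintro ⟨s, hs⟩
      rw [Hval I₁ I₂ I₃ J₁ J₂ c_u c_y c_v hI₁ hJ₂ s] at hs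
      linarith
    · intro h
      exact ⟨0, by rw [Hval I₁ I₂ I₃ J₁ J₂ c_u c_y c_v hI₁ hJ₂ 0, h]; norm_num⟩
  · constructor
    · intro h
      have hs := h 0
      rw [Hval I₁ I₂ I₃ J₁ J₂ c_u c_y c_v hI₁ hJ₂ 0] at hs
      linarith
    · intro h s
      rw [Hval I₁ I₂ I₃ J₁ J₂ c_u c_y c_v hI₁ hJ₂ s, h]
      norm_num

end BivPPWave

end
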